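/- 3-partition to subtree cover reduction, backward direction: with the tree as above (root r, children v_1,…,v_{3n}, v_j having a_j leaf children, unit edge weights, B/4 < a_j < B/2, Σ_j a_j = nB), if there is a cover by n rooted subtrees each of weight at most B + 3, then each subtree contains exactly 3 of the vertices v_j together with all their children, and the corresponding triples of the a_j each sum to exactly B; hence the 3-partition instance is a yes-instance. -/

import Mathlib

/-- 3-partition to subtree cover, backward direction.  The tree has root `r` with `3n`
children `v_1,…,v_{3n}`, where `v_j` has `a j` leaf children and all edges have weight
`1` (with `B/4 < a j < B/2` and `∑ a j = n·B`).  A rooted subtree is given by its set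
`M i` of middle vertices and its set `L i` of leaves, every chosen leaf's parent being
chosen; its weight is `|M i| + |L i|`.  If `n` such subtrees cover all vertices and each
has weight at most `B + 3`, then every subtree contains exactly `3` middle vertices
together with all their children, the corresponding triples of the `a j` each sum to
`B`, and the middle vertices are partitioned among the subtrees; hence the 3-partition
instance is a yes-instance. -/
theorem subtree_cover_to_three_partition (n B : ℕ) (a : Fin (3 * n) → ℕ)
    (ha : ∀ j, B < 4 * a j ∧ 2 * a j < B)
    (hsum : ∑ j, a j = n * B)
    (M : Fin n → Finset (Fin (3 * n)))
    (L : Fin n → Finset ((j : Fin (3 * n)) × Fin (a j)))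
    (hML : ∀ i x, x ∈ L i → x.1 ∈ M i)
    (hcovM : ∀ j, ∃ i, j ∈ M i)
    (hcovL : ∀ x : (j : Fin (3 * n)) × Fin (a j), ∃ i, x ∈ L i)
    (hweight : ∀ i, (M i).card + (L i).card ≤ B + 3) :
    (∀ i, (M i).card = 3 ∧
      (∀ x : (j : Fin (3 * n)) × Fin (a j), x.1 ∈ M i → x ∈ L i) ∧
      (∑ j ∈ M i, a j = B)) ∧
    (∀ j, ∃! i, j ∈ M i) := by
  classical
  set c : Fin (3 * n) → ℕ :=
    fun j => (Finset.univ.filter fun i => j ∈ M i).card with hc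
  set d : ((j : Fin (3 * n)) × Fin (a j)) → ℕ :=
    fun x => (Finset.univ.filter fun i => x ∈ L i).card with hd
  have hc1 : ∀ j, 1 ≤ c j := by
    intro j
    obtain ⟨i, hi⟩ := hcovM j
    exact Finset.card_pos.mpr ⟨i, by simp [hi]⟩
  have hd1 : ∀ x, 1 ≤ d x := by
    intro x
    obtain ⟨i, hi⟩ := hcovL x
    exact Finset.card_pos.mpr ⟨i, by simp [hi]⟩
  -- double counting
  have hSM : ∑ i, (M i).card = ∑ j, c j := by
    simp only [hc, Finset.card_filter]
    rw [Finset.sum_comm]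
    congr 1
    ext i
    rw [← Finset.card_filter]
    congr 1
    ext j
    simp
  have hSL : ∑ i, (L i).card = ∑ x, d x := by
    simp only [hd, Finset.card_filter]
    rw [Finset.sum_comm]
    congr 1
    ext i
    rw [← Finset.card_filter]
    congr 1
    ext x
    simp
  have hTot : ∑ i, ((M i).card + (L i).card) ≤ n * (B + 3) := by
    calc ∑ i, ((M i).card + (L i).card) ≤ ∑ _i : Fin n, (B + 3) :=
          Finset.sum_le_sum fun i _ => hweight i
      _ = n * (B + 3) := by simp [Finset.sum_const, mul_comm]
  have hsplit : ∑ i, ((M i).card + (L i).card) = ∑ j, c j + ∑ x, d x := by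
    rw [Finset.sum_add_distrib, hSM, hSL]
  have h3n : 3 * n ≤ ∑ j, c j := by
    calc (3 * n : ℕ) = ∑ _j : Fin (3 * n), 1 := by simp
      _ ≤ ∑ j, c j := Finset.sum_le_sum fun j _ => hc1 j
  have hcount : ∑ x : (j : Fin (3 * n)) × Fin (a j), (1 : ℕ) = ∑ j, a j := by
    rw [← Finset.univ_sigma_univ, Finset.sum_sigma]
    simp
  have hnB : n * B ≤ ∑ x, d x := by
    calc n * B = ∑ x : (j : Fin (3 * n)) × Fin (a j), (1 : ℕ) := by
          rw [hcount, hsum]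
      _ ≤ ∑ x, d x := Finset.sum_le_sum fun x _ => hd1 x
  have hnB3 : n * (B + 3) = n * B + 3 * n := by ring
  have hceq : ∑ j, c j = 3 * n := by omega
  have hdeq : ∑ x, d x = n * B := by omega
  -- each j is in exactly one M i
  have hcone : ∀ j, c j = 1 := by
    have h := (Finset.sum_eq_sum_iff_of_le (s := Finset.univ)
        (f := fun _ : Fin (3 * n) => (1 : ℕ)) (g := c)
        (fun j _ => hc1 j)).mp (by simpa using hceq.symm)
    intro j
    exact (h j (Finset.mem_univ j)).symm
  have huniq : ∀ j, ∃! i, j ∈ M i := by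
    intro j
    obtain ⟨i0, hi0⟩ := hcovM j
    refine ⟨i0, hi0, fun i hi => ?_⟩
    have h1 : (Finset.univ.filter fun i => j ∈ M i).card ≤ 1 := le_of_eq (hcone j)
    exact Finset.card_le_one.mp h1 i (by simp [hi]) i0 (by simp [hi0])
  -- each subtree has weight exactly B+3
  have hWeach : ∀ i, (M i).card + (L i).card = B + 3 := by
    have hsum' : ∑ i, ((M i).card + (L i).card) = ∑ _i : Fin n, (B + 3) := by
      rw [hsplit, hceq, hdeq]
      simp [Finset.sum_const, mul_comm]
      omega
    have h := (Finset.sum_eq_sum_iff_of_le (s := Finset.univ)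
        (f := fun i => (M i).card + (L i).card)
        (g := fun _ : Fin n => (B + 3)) (fun i _ => hweight i)).mp hsum'
    exact fun i => h i (Finset.mem_univ i)
  -- L i contains all children of M i, and equals the sigma set
  have hLfull : ∀ i, ∀ x : (j : Fin (3 * n)) × Fin (a j), x.1 ∈ M i → x ∈ L i := by
    intro i x hx
    obtain ⟨i', hi'⟩ := hcovL x
    have hx' : x.1 ∈ M i' := hML i' x hi'
    obtain ⟨i0, _, hu⟩ := huniq x.1
    have : i' = i := (hu i' hx').trans (hu i hx).symm
    rwa [this] at hi'
  have hLeq : ∀ i, L i = (M i).sigma fun _ => Finset.univ := by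
    intro i
    ext x
    simp only [Finset.mem_sigma, Finset.mem_univ, and_true]
    exact ⟨fun h => hML i x h, fun h => hLfull i ⟨x.1, x.2⟩ h⟩
  have hLcard : ∀ i, (L i).card = ∑ j ∈ M i, a j := by
    intro i
    rw [hLeq i, Finset.card_sigma]
    simp
  refine ⟨fun i => ?_, huniq⟩
  have hm : (M i).card + ∑ j ∈ M i, a j = B + 3 := by
    rw [← hLcard i]; exact hWeach i
  set m := (M i).card with hmdef
  set S := ∑ j ∈ M i, a j with hSdef
  have h2 : 2 * S + m ≤ m * B := by
    calc 2 * S + m = ∑ j ∈ M i, (2 * a j + 1) := by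
          rw [Finset.sum_add_distrib, ← Finset.mul_sum]
          simp [hSdef, hmdef]
      _ ≤ ∑ _j ∈ M i, B := Finset.sum_le_sum fun j _ => by
          have := (ha j).2; omega
      _ = m * B := by simp [Finset.sum_const, mul_comm, hmdef]
  have h3 : m * (B + 1) ≤ 4 * S := by
    calc m * (B + 1) = ∑ _j ∈ M i, (B + 1) := by simp [Finset.sum_const, mul_comm, hmdef]
      _ ≤ ∑ j ∈ M i, 4 * a j := Finset.sum_le_sum fun j _ => by
          have := (ha j).1; omega
      _ = 4 * S := by rw [← Finset.mul_sum]
  have hm3 : m = 3 := by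
    rcases Nat.lt_or_ge m 3 with h' | h'
    · have hb : m * B ≤ 2 * B := Nat.mul_le_mul_right B (by omega)
      have : 2 * S + m ≤ 2 * B := le_trans h2 hb
      omega
    · rcases Nat.lt_or_ge m 4 with h4 | h4
      · omega
      · have hb : 4 * (B + 1) ≤ m * (B + 1) := Nat.mul_le_mul_right (B + 1) h4
        have : 4 * (B + 1) ≤ 4 * S := le_trans hb h3
        omega
  exact ⟨hm3, hLfull i, by omega⟩
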